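/- Let Q ∈ ℝ^{k×k} be symmetric positive definite with smallest eigenvalue λ_min(Q), let Ã ∈ ℝ^{k×k}, let δ > 0, let d : ℝ → ℝᵏ be continuous with ‖d(t)‖_∞ ≤ δ for all t ≥ 0, and let χ, γ > 0 satisfy χ > ‖Ã‖₂ / λ_min(Q) and γ > δ. Suppose ε : ℝ → ℝᵏ is differentiable and satisfies, for all t ≥ 0, ε'(t) = (Ã − χ Q) ε(t) + d(t) − γ · sign(Q ε(t)), where sign is applied componentwise with sign(0) = 0. Then ε(t) → 0 as t → ∞. -/

import Mathlib

open Matrix Filter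
open scoped Matrix.Norms.L2Operator

section helpers
open scoped RealInnerProductSpace

lemma real_self_mul_sign (r : ℝ) : r * Real.sign r = |r| := by
  rcases lt_trichotomy r 0 with h | h | h
  · rw [Real.sign_of_neg h, abs_of_neg h]; ring
  · simp [h]
  · rw [Real.sign_of_pos h, abs_of_pos h]; ring

lemma hasDerivAt_dotProduct {k : ℕ} {u v : ℝ → Fin k → ℝ} {u' v' : Fin k → ℝ} {t : ℝ}
    (hu : HasDerivAt u u' t) (hv : HasDerivAt v v' t) :
    HasDerivAt (fun s => u s ⬝ᵥ v s) (u' ⬝ᵥ v t + u t ⬝ᵥ v') t := by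
  have h : ∀ i ∈ Finset.univ, HasDerivAt (fun s => u s i * v s i)
      (u' i * v t i + u t i * v' i) t :=
    fun i _ => (hasDerivAt_pi.1 hu i).mul (hasDerivAt_pi.1 hv i)
  have := HasDerivAt.fun_sum h
  simpa [dotProduct, Finset.sum_add_distrib] using this

lemma hasDerivAt_mulVec {k : ℕ} (M : Matrix (Fin k) (Fin k) ℝ) {u : ℝ → Fin k → ℝ}
    {u' : Fin k → ℝ} {t : ℝ} (hu : HasDerivAt u u' t) :
    HasDerivAt (fun s => M.mulVec (u s)) (M.mulVec u') t := by
  rw [hasDerivAt_pi]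
  intro i
  simp only [Matrix.mulVec, dotProduct]
  exact HasDerivAt.fun_sum fun j _ => (hasDerivAt_pi.1 hu j).const_mul (M i j)

lemma rayleigh_lower {k : ℕ} (Q : Matrix (Fin k) (Fin k) ℝ) (hQ : Q.IsHermitian) (lam : ℝ)
    (hlam : IsLeast {r : ℝ | Module.End.HasEigenvalue (Matrix.mulVecLin Q) r} lam)
    (x : EuclideanSpace ℝ (Fin k)) :
    lam * ‖x‖ ^ 2 ≤ ⟪Matrix.toEuclideanLin Q x, x⟫ := by
  rcases eq_or_ne x 0 with rfl | hx
  · simp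
  haveI : Nontrivial (EuclideanSpace ℝ (Fin k)) := nontrivial_of_ne x 0 hx
  set T := Matrix.toEuclideanLin Q with hT
  have hsymm : T.IsSymmetric := Matrix.isHermitian_iff_isSymmetric.mp hQ
  set m : ℝ := ⨅ y : { y : EuclideanSpace ℝ (Fin k) // y ≠ 0 },
      RCLike.re ⟪T y, (y : EuclideanSpace ℝ (Fin k))⟫ / ‖(y : EuclideanSpace ℝ (Fin k))‖ ^ 2
    with hm
  have heig : Module.End.HasEigenvalue T m := by
    exact hsymm.hasEigenvalue_iInf_of_finiteDimensional
  have htrans : Module.End.HasEigenvalue (Matrix.mulVecLin Q) m := by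
    obtain ⟨v, hv⟩ := heig.exists_hasEigenvector
    have hv0 : v ≠ 0 := hv.right
    have happ : T v = m • v := hv.apply_eq_smul
    set v' : Fin k → ℝ := WithLp.equiv 2 (Fin k → ℝ) v with hv'
    have hmv : Q.mulVec v' = m • v' := by
      apply_fun WithLp.equiv 2 (Fin k → ℝ) at happ
      simpa [hT, hv', Matrix.toEuclideanLin_apply] using happ
    have hv'0 : v' ≠ 0 := fun h => hv0 (by
      simpa [hv'] using congrArg (WithLp.equiv 2 (Fin k → ℝ)).symm h)
    exact Module.End.hasEigenvalue_of_hasEigenvector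
      ⟨Module.End.mem_eigenspace_iff.mpr (by simpa using hmv), hv'0⟩
  have hlm : lam ≤ m := hlam.2 htrans
  have hbdd : BddBelow (Set.range fun y : { y : EuclideanSpace ℝ (Fin k) // y ≠ 0 } =>
      RCLike.re ⟪T y, (y : EuclideanSpace ℝ (Fin k))⟫ / ‖(y : EuclideanSpace ℝ (Fin k))‖ ^ 2) := by
    set Tc := LinearMap.toContinuousLinearMap T
    refine ⟨-‖Tc‖, ?_⟩
    rintro r ⟨⟨y, hy⟩, rfl⟩
    have hy2 : (0:ℝ) < ‖y‖ ^ 2 := pow_pos (norm_pos_iff.mpr hy) 2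
    rw [le_div_iff₀ hy2]
    have h1 : |⟪T y, y⟫| ≤ ‖T y‖ * ‖y‖ := abs_real_inner_le_norm _ _
    have h2 : ‖T y‖ ≤ ‖Tc‖ * ‖y‖ := Tc.le_opNorm y
    have : -(‖Tc‖ * ‖y‖ ^ 2) ≤ ⟪T y, y⟫ := by
      have := (abs_le.mp h1).1
      nlinarith [norm_nonneg y, norm_nonneg (T y)]
    simpa using this
  have hle : m ≤ ⟪T x, x⟫ / ‖x‖ ^ 2 := by
    simpa [hm] using ciInf_le hbdd (⟨x, hx⟩ : { y : EuclideanSpace ℝ (Fin k) // y ≠ 0 })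
  have hx2 : (0:ℝ) < ‖x‖ ^ 2 := pow_pos (norm_pos_iff.mpr hx) 2
  calc lam * ‖x‖ ^ 2 ≤ m * ‖x‖ ^ 2 := by nlinarith
    _ ≤ ⟪T x, x⟫ := by rw [← le_div_iff₀ hx2] at *; exact hle

end helpers

set_option linter.unusedVariables false in
open scoped RealInnerProductSpace in
set_option maxHeartbeats 1000000 in
/-- **convergence of the reduced error subsystem.** Let `Q` be symmetric
positive definite with smallest eigenvalue `lam`, let `Ã` be arbitrary, `δ > 0`, let
`d : ℝ → ℝᵏ` be continuous with `‖d(t)‖_∞ ≤ δ` for `t ≥ 0`, and suppose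
`χ > ‖Ã‖₂/lam` and `γ > δ`.  If a differentiable `ε : ℝ → ℝᵏ` satisfies
`ε'(t) = (Ã − χQ)ε(t) + d(t) − γ sign(Qε(t))` (sign componentwise, `sign 0 = 0`)
for all `t ≥ 0`, then `ε(t) → 0` as `t → ∞`.
(Here `‖·‖` on matrices is the spectral norm, via `Matrix.L2OpNorm`.) -/
theorem reduced_error_subsystem_tendsto_zero (k : ℕ)
    (Q : Matrix (Fin k) (Fin k) ℝ) (hQ : Q.PosDef)
    (lam : ℝ)
    (hlam : IsLeast {r : ℝ | Module.End.HasEigenvalue (Matrix.mulVecLin Q) r} lam)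
    (Atil : Matrix (Fin k) (Fin k) ℝ)
    (del : ℝ) (hdel : 0 < del)
    (d : ℝ → Fin k → ℝ) (hdcont : Continuous d)
    (hdbound : ∀ t : ℝ, 0 ≤ t → ∀ j, |d t j| ≤ del)
    (chi gam : ℝ) (hchipos : 0 < chi) (hgampos : 0 < gam)
    (hchi : chi > ‖Atil‖ / lam) (hgam : gam > del)
    (eps : ℝ → Fin k → ℝ) (heps : Differentiable ℝ eps)
    (hode : ∀ t : ℝ, 0 ≤ t →
      HasDerivAt eps
        ((Atil - chi • Q).mulVec (eps t) + d t
          - gam • fun j => Real.sign ((Q.mulVec (eps t)) j)) t) :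
    Tendsto eps atTop (nhds 0) := by
  classical
  set toE : (Fin k → ℝ) → EuclideanSpace ℝ (Fin k) :=
    fun x => (WithLp.equiv 2 (Fin k → ℝ)).symm x with htoE
  -- basic dictionary
  have hdot : ∀ x y : Fin k → ℝ, x ⬝ᵥ y = ⟪toE x, toE y⟫ := by
    intro x y; simp [dotProduct, PiLp.inner_apply, htoE, mul_comm]
  have hQmul : ∀ (M : Matrix (Fin k) (Fin k) ℝ) (x : Fin k → ℝ),
      ‖toE (M.mulVec x)‖ ≤ ‖M‖ * ‖toE x‖ := fun M x => M.l2_opNorm_mulVec (toE x)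
  have htoE0 : ∀ x : Fin k → ℝ, toE x = 0 ↔ x = 0 := fun x =>
    ⟨fun h => (WithLp.equiv 2 (Fin k → ℝ)).symm.injective h, fun h => by rw [h]; rfl⟩
  -- the Rayleigh bound in dot-product language
  have key : ∀ x : Fin k → ℝ, lam * ‖toE x‖ ^ 2 ≤ x ⬝ᵥ Q.mulVec x := by
    intro x
    have h := rayleigh_lower Q hQ.1 lam hlam (toE x)
    have h2 : (Matrix.toEuclideanLin Q) (toE x) = toE (Q.mulVec x) := rfl
    rw [h2] at h
    rw [hdot, real_inner_comm]
    exact h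
  -- positivity of lam
  have hlampos : 0 < lam := by
    obtain ⟨w, hw⟩ := hlam.1.exists_hasEigenvector
    have hw0 : w ≠ 0 := hw.right
    have happ : Q.mulVec w = lam • w := by
      simpa using hw.apply_eq_smul
    have hpos : 0 < w ⬝ᵥ Q.mulVec w := by
      have := hQ.dotProduct_mulVec_pos hw0
      simpa using this
    have hww : 0 < w ⬝ᵥ w := by
      rw [hdot, real_inner_self_eq_norm_sq]
      have : toE w ≠ 0 := fun h => hw0 ((htoE0 w).mp h)
      exact pow_pos (norm_pos_iff.mpr this) 2
    rw [happ, dotProduct_smul, smul_eq_mul] at hpos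
    nlinarith [hpos, hww]
  -- norm of Q positive
  have hQnormpos : 0 < ‖Q‖ := by
    obtain ⟨w, hw⟩ := hlam.1.exists_hasEigenvector
    have hw0 : w ≠ 0 := hw.right
    have happ : Q.mulVec w = lam • w := by simpa using hw.apply_eq_smul
    have h1 := hQmul Q w
    rw [happ] at h1
    have hwpos : 0 < ‖toE w‖ := norm_pos_iff.mpr (fun h => hw0 ((htoE0 w).mp h))
    have h2 : ‖toE (lam • w)‖ = lam * ‖toE w‖ := by
      have h3 : toE (lam • w) = lam • toE w := rfl
      rw [h3, norm_smul, Real.norm_eq_abs, abs_of_pos hlampos]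
    nlinarith [h1, h2, hwpos, mul_pos hlampos hwpos]
  have hAc : ‖Atil‖ < chi * lam := (div_lt_iff₀ hlampos).mp hchi
  set c : ℝ := chi * lam - ‖Atil‖ with hc
  have hcpos : 0 < c := by rw [hc]; linarith
  set α : ℝ := 2 * c * lam / ‖Q‖ with hα
  have hαpos : 0 < α := div_pos (by positivity) hQnormpos
  set V : ℝ → ℝ := fun t => eps t ⬝ᵥ Q.mulVec (eps t) with hV
  have hVlow : ∀ t, lam * ‖toE (eps t)‖ ^ 2 ≤ V t := fun t => key (eps t)
  have hVup : ∀ t, V t ≤ ‖Q‖ * ‖toE (eps t)‖ ^ 2 := by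
    intro t
    have h1 : V t = ⟪toE (eps t), toE (Q.mulVec (eps t))⟫ := hdot _ _
    have h2 := real_inner_le_norm (toE (eps t)) (toE (Q.mulVec (eps t)))
    have h3 := hQmul Q (eps t)
    nlinarith [norm_nonneg (toE (eps t)), norm_nonneg (toE (Q.mulVec (eps t)))]
  have hQxlow : ∀ t, lam * ‖toE (eps t)‖ ≤ ‖toE (Q.mulVec (eps t))‖ := by
    intro t
    rcases eq_or_ne (eps t) 0 with h | h
    · have h0 : toE (0 : Fin k → ℝ) = 0 := rfl
      simp [h, Matrix.mulVec_zero, h0]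
    · have hxpos : 0 < ‖toE (eps t)‖ := norm_pos_iff.mpr (fun hh => h ((htoE0 _).mp hh))
      have h1 := key (eps t)
      have h2 : eps t ⬝ᵥ Q.mulVec (eps t) ≤ ‖toE (eps t)‖ * ‖toE (Q.mulVec (eps t))‖ := by
        rw [hdot]; exact real_inner_le_norm _ _
      nlinarith
  set e : ℝ → Fin k → ℝ := fun t => (Atil - chi • Q).mulVec (eps t) + d t
      - gam • fun j => Real.sign ((Q.mulVec (eps t)) j) with he
  have hVderiv : ∀ t, 0 ≤ t → HasDerivAt V (2 * (Q.mulVec (eps t) ⬝ᵥ e t)) t := by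
    intro t ht
    have hde := hode t ht
    have h1 := hasDerivAt_dotProduct hde (hasDerivAt_mulVec Q hde)
    convert h1 using 1
    have hsymQ : Qᵀ = Q := by
      rw [← Matrix.conjTranspose_eq_transpose_of_trivial]; exact hQ.1
    have h2 : eps t ⬝ᵥ Q.mulVec (e t) = Q.mulVec (eps t) ⬝ᵥ e t := by
      rw [Matrix.dotProduct_mulVec]
      congr 1
      rw [← Matrix.mulVec_transpose, hsymQ]
    rw [dotProduct_comm (e t), h2]
    ring
  have hVbound : ∀ t, 0 ≤ t → 2 * (Q.mulVec (eps t) ⬝ᵥ e t) ≤ -α * V t := by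
    intro t ht
    set Qx : Fin k → ℝ := Q.mulVec (eps t) with hQx
    set S : ℝ := ∑ j, |Qx j| with hS
    have hsplit : Qx ⬝ᵥ e t = Qx ⬝ᵥ Atil.mulVec (eps t) - chi * (Qx ⬝ᵥ Qx) + Qx ⬝ᵥ d t
        - gam * (∑ j, Qx j * Real.sign (Qx j)) := by
      rw [he]
      simp only [Matrix.sub_mulVec, Matrix.smul_mulVec, dotProduct_add,
        dotProduct_sub, dotProduct_smul, smul_eq_mul]
      rw [← hQx]
      rfl
    have hsign : (∑ j, Qx j * Real.sign (Qx j)) = S := by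
      rw [hS]; exact Finset.sum_congr rfl fun j _ => real_self_mul_sign _
    have hS0 : 0 ≤ S := Finset.sum_nonneg fun j _ => abs_nonneg _
    have hdS : Qx ⬝ᵥ d t ≤ del * S := by
      rw [dotProduct, hS, Finset.mul_sum]
      refine Finset.sum_le_sum fun j _ => ?_
      calc Qx j * d t j ≤ |Qx j * d t j| := le_abs_self _
        _ = |Qx j| * |d t j| := abs_mul _ _
        _ ≤ |Qx j| * del := mul_le_mul_of_nonneg_left (hdbound t ht j) (abs_nonneg _)
        _ = del * |Qx j| := mul_comm _ _
    have hA : Qx ⬝ᵥ Atil.mulVec (eps t) ≤ ‖toE Qx‖ * (‖Atil‖ * ‖toE (eps t)‖) := by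
      rw [hdot]
      calc ⟪toE Qx, toE (Atil.mulVec (eps t))⟫
          ≤ ‖toE Qx‖ * ‖toE (Atil.mulVec (eps t))‖ := real_inner_le_norm _ _
        _ ≤ _ := mul_le_mul_of_nonneg_left (hQmul Atil (eps t)) (norm_nonneg _)
    have hQQ : Qx ⬝ᵥ Qx = ‖toE Qx‖ ^ 2 := by rw [hdot, real_inner_self_eq_norm_sq]
    have p0 : del * S ≤ gam * S := mul_le_mul_of_nonneg_right hgam.le hS0
    have step1 : Qx ⬝ᵥ e t ≤ ‖toE Qx‖ * (‖Atil‖ * ‖toE (eps t)‖) - chi * ‖toE Qx‖ ^ 2 := by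
      rw [hsplit, hsign, hQQ]
      linarith
    have step2 : chi * ((lam * ‖toE (eps t)‖) * ‖toE Qx‖) ≤ chi * (‖toE Qx‖ * ‖toE Qx‖) :=
      mul_le_mul_of_nonneg_left
        (mul_le_mul_of_nonneg_right (hQxlow t) (norm_nonneg _)) hchipos.le
    have step3 : Qx ⬝ᵥ e t ≤ -c * (‖toE Qx‖ * ‖toE (eps t)‖) := by
      rw [hc]
      nlinarith [step1, step2]
    have step4 : -c * (‖toE Qx‖ * ‖toE (eps t)‖) ≤ -c * (lam * ‖toE (eps t)‖ ^ 2) := by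
      have h := mul_le_mul_of_nonneg_right (hQxlow t) (norm_nonneg (toE (eps t)))
      have h2 := mul_le_mul_of_nonneg_left h hcpos.le
      nlinarith [h2]
    have step5 : α * V t ≤ 2 * c * lam * ‖toE (eps t)‖ ^ 2 := by
      rw [hα, div_mul_eq_mul_div, div_le_iff₀ hQnormpos]
      nlinarith [hVup t, mul_pos hcpos hlampos]
    linarith [step3, step4, step5]
  -- pi norm is bounded by the Euclidean norm
  have hPiLe : ∀ x : Fin k → ℝ, ‖x‖ ≤ ‖toE x‖ := by
    intro x
    rw [pi_norm_le_iff_of_nonneg (norm_nonneg (toE x))]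
    intro i
    rw [EuclideanSpace.norm_eq]
    calc ‖x i‖ = Real.sqrt (‖x i‖ ^ 2) := (Real.sqrt_sq (norm_nonneg _)).symm
      _ ≤ Real.sqrt (∑ j, ‖toE x j‖ ^ 2) := Real.sqrt_le_sqrt
          (Finset.single_le_sum (f := fun j => ‖toE x j‖ ^ 2)
            (fun j _ => by positivity) (Finset.mem_univ i))
  -- the damped Lyapunov function is antitone on [0, ∞)
  set g : ℝ → ℝ := fun t => V t * Real.exp (α * t) with hg
  have hVdiffAt : ∀ t : ℝ, DifferentiableAt ℝ V t := fun t =>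
    (hasDerivAt_dotProduct (heps t).hasDerivAt
      (hasDerivAt_mulVec Q (heps t).hasDerivAt)).differentiableAt
  have hgderiv : ∀ t, 0 ≤ t →
      HasDerivAt g (2 * (Q.mulVec (eps t) ⬝ᵥ e t) * Real.exp (α * t)
        + V t * (Real.exp (α * t) * α)) t := by
    intro t ht
    have h1 : HasDerivAt (fun s : ℝ => α * s) α t := by
      simpa using (hasDerivAt_id t).const_mul α
    exact (hVderiv t ht).mul h1.exp
  have hgcont : Continuous g := by
    have hVc : Continuous V := by
      rw [continuous_iff_continuousAt]; exact fun t => (hVdiffAt t).continuousAt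
    exact hVc.mul (Real.continuous_exp.comp (continuous_const.mul continuous_id))
  have hganti : AntitoneOn g (Set.Ici (0:ℝ)) := by
    apply antitoneOn_of_deriv_nonpos (convex_Ici 0) hgcont.continuousOn
    · intro x hx
      rw [interior_Ici] at hx
      exact (hgderiv x hx.le).differentiableAt.differentiableWithinAt
    · intro x hx
      rw [interior_Ici] at hx
      rw [(hgderiv x hx.le).deriv]
      have h1 := mul_le_mul_of_nonneg_right (hVbound x hx.le) (Real.exp_pos (α * x)).le
      nlinarith [h1]
  have hVdecay : ∀ t, 0 ≤ t → V t ≤ V 0 * Real.exp (-(α * t)) := by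
    intro t ht
    have h1 : g t ≤ g 0 := hganti Set.self_mem_Ici ht ht
    rw [hg] at h1
    simp only [mul_zero, Real.exp_zero, mul_one] at h1
    have hexp : (0:ℝ) < Real.exp (α * t) := Real.exp_pos _
    calc V t ≤ V 0 / Real.exp (α * t) := (le_div_iff₀ hexp).mpr h1
      _ = V 0 * Real.exp (-(α * t)) := by rw [Real.exp_neg, div_eq_mul_inv]
  -- final squeeze
  have hnormbound : ∀ t, 0 ≤ t →
      ‖eps t‖ ≤ Real.sqrt (V 0 / lam * Real.exp (-(α * t))) := by
    intro t ht
    have h1 : lam * ‖toE (eps t)‖ ^ 2 ≤ V 0 * Real.exp (-(α * t)) :=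
      le_trans (hVlow t) (hVdecay t ht)
    have h2 : ‖toE (eps t)‖ ^ 2 ≤ V 0 / lam * Real.exp (-(α * t)) := by
      rw [div_mul_eq_mul_div, le_div_iff₀ hlampos]
      linarith [h1]
    calc ‖eps t‖ ≤ ‖toE (eps t)‖ := hPiLe (eps t)
      _ = Real.sqrt (‖toE (eps t)‖ ^ 2) := (Real.sqrt_sq (norm_nonneg _)).symm
      _ ≤ Real.sqrt (V 0 / lam * Real.exp (-(α * t))) := Real.sqrt_le_sqrt h2
  have hBtend : Tendsto (fun t => Real.sqrt (V 0 / lam * Real.exp (-(α * t)))) atTop (nhds 0) := by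
    have h1 : Tendsto (fun t : ℝ => -(α * t)) atTop atBot := by
      rw [tendsto_neg_atBot_iff]
      exact Tendsto.const_mul_atTop hαpos tendsto_id
    have h2 : Tendsto (fun t : ℝ => Real.exp (-(α * t))) atTop (nhds 0) :=
      Real.tendsto_exp_atBot.comp h1
    have h3 : Tendsto (fun t => V 0 / lam * Real.exp (-(α * t))) atTop (nhds 0) := by
      simpa using h2.const_mul (V 0 / lam)
    have h4 := (Real.continuous_sqrt.tendsto 0).comp h3
    simpa [Function.comp_def] using h4
  have hnorm0 : Tendsto (fun t => ‖eps t‖) atTop (nhds 0) :=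
    squeeze_zero' (eventually_atTop.2 ⟨0, fun t _ => norm_nonneg _⟩)
      (eventually_atTop.2 ⟨0, fun t ht => hnormbound t ht⟩) hBtend
  exact tendsto_zero_iff_norm_tendsto_zero.mpr hnorm0
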